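/- For every 1 ≤ i ≤ n one has (Id − S_1∘S_2∘⋯∘S_n)(e_i) = A·β_i^+. That is, the endomorphism 1 − c of the weight lattice, where c = s_1 s_2 ⋯ s_n is the Coxeter element, sends the fundamental weight ω_i to the root β_i^+ = s_1⋯s_{i−1}α_i. -/

import Mathlib

open Finset

/-- The simple reflection `s_i` of the Weyl group of `A` acting on the root lattice
in the basis of simple roots: `R_i(e_j) = e_j - a_{ij} e_i`. -/
def Rmap {n : ℕ} (A : Matrix (Fin n) (Fin n) ℤ) (i : Fin n) (v : Fin n → ℤ) : Fin n → ℤ :=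
  v - (∑ j, A i j * v j) • Pi.single i (1 : ℤ)

/-- The simple reflection `s_i` acting on the weight lattice in the basis of
fundamental weights. -/
def Smap {n : ℕ} (A : Matrix (Fin n) (Fin n) ℤ) (i : Fin n) (v : Fin n → ℤ) : Fin n → ℤ :=
  v - (v i) • (fun ℓ => A ℓ i)

/-- `R` indexed by a natural number (acting trivially out of range). -/
def Rnat {n : ℕ} (A : Matrix (Fin n) (Fin n) ℤ) (j : ℕ) (v : Fin n → ℤ) : Fin n → ℤ :=
  if h : j < n then Rmap A ⟨j, h⟩ v else v

/-- `β_i^+ = s_1 ⋯ s_{i-1} α_i` in simple root coordinates. -/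
def betaPlus {n : ℕ} (A : Matrix (Fin n) (Fin n) ℤ) (i : Fin n) : Fin n → ℤ :=
  (List.range i.val).foldr (fun j v => Rnat A j v) (Pi.single i (1 : ℤ))

/-- The Coxeter element `c = s_1 s_2 ⋯ s_n` acting on the weight lattice:
`S_1 ∘ S_2 ∘ ⋯ ∘ S_n`. -/
def coxS {n : ℕ} (A : Matrix (Fin n) (Fin n) ℤ) (v : Fin n → ℤ) : Fin n → ℤ :=
  (List.finRange n).foldr (fun j w => Smap A j w) v

section aux

variable {n : ℕ} (A : Matrix (Fin n) (Fin n) ℤ)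

/-- `S` indexed by a natural number (acting trivially out of range). -/
def Snat (j : ℕ) (v : Fin n → ℤ) : Fin n → ℤ :=
  if h : j < n then Smap A ⟨j, h⟩ v else v

lemma mulVec_single_eq (j : Fin n) :
    A.mulVec (Pi.single j (1 : ℤ)) = fun ℓ => A ℓ j := by
  funext ℓ
  simp [Matrix.mulVec_single]

lemma smap_mulVec (j : Fin n) (w : Fin n → ℤ) :
    Smap A j (A.mulVec w) = A.mulVec (Rmap A j w) := by
  unfold Smap Rmap
  rw [Matrix.mulVec_sub, Matrix.mulVec_smul, mulVec_single_eq]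
  congr 2

lemma smap_sub (j : Fin n) (u v : Fin n → ℤ) :
    Smap A j (u - v) = Smap A j u - Smap A j v := by
  funext ℓ
  simp only [Smap, Pi.sub_apply, Pi.smul_apply, smul_eq_mul]
  ring

lemma smap_single_of_ne {i j : Fin n} (h : j ≠ i) :
    Smap A j (Pi.single i (1 : ℤ)) = Pi.single i (1 : ℤ) := by
  funext ℓ
  simp [Smap, Pi.single_eq_of_ne h]

lemma smap_step {i j : Fin n} (h : j ≠ i) (w : Fin n → ℤ) :
    Smap A j (Pi.single i (1 : ℤ) - A.mulVec w)
      = Pi.single i (1 : ℤ) - A.mulVec (Rmap A j w) := by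
  rw [smap_sub, smap_single_of_ne A h, smap_mulVec]

lemma foldr_snat_fix (i : Fin n) (L : List ℕ) (hL : ∀ j ∈ L, j ≠ i.val) :
    L.foldr (fun j v => Snat A j v) (Pi.single i (1 : ℤ)) = Pi.single i (1 : ℤ) := by
  induction L with
  | nil => rfl
  | cons a t ih =>
    have ht : ∀ j ∈ t, j ≠ i.val := fun j hj => hL j (List.mem_cons_of_mem a hj)
    simp only [List.foldr_cons, ih ht]
    unfold Snat
    split
    · exact smap_single_of_ne A (by simpa [Fin.ext_iff] using hL a List.mem_cons_self)
    · rfl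

lemma foldr_snat_step (i : Fin n) (w : Fin n → ℤ) (L : List ℕ) (hL : ∀ j ∈ L, j ≠ i.val) :
    L.foldr (fun j v => Snat A j v) (Pi.single i (1 : ℤ) - A.mulVec w)
      = Pi.single i (1 : ℤ) - A.mulVec (L.foldr (fun j v => Rnat A j v) w) := by
  induction L generalizing w with
  | nil => rfl
  | cons a t ih =>
    have ht : ∀ j ∈ t, j ≠ i.val := fun j hj => hL j (List.mem_cons_of_mem a hj)
    simp only [List.foldr_cons, ih w ht]
    unfold Snat Rnat
    split
    · exact smap_step A (by simpa [Fin.ext_iff] using hL a List.mem_cons_self) _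
    · rfl

lemma coxS_eq_snat (v : Fin n → ℤ) :
    coxS A v = (List.range n).foldr (fun j w => Snat A j w) v := by
  unfold coxS
  rw [← List.map_coe_finRange_eq_range (n := n), List.foldr_map]
  congr 1
  funext j w
  simp [Snat, j.isLt]

end aux

/-- `(Id − S_1∘S_2∘⋯∘S_n)(e_i) = A·β_i^+`: the endomorphism `1 - c` of the weight
lattice sends the fundamental weight `ω_i` to the root `β_i^+ = s_1⋯s_{i−1}α_i`. -/
theorem statement3 (n : ℕ) (hn : 1 ≤ n) (A : Matrix (Fin n) (Fin n) ℤ) (i : Fin n) :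
    Pi.single i (1 : ℤ) - coxS A (Pi.single i (1 : ℤ)) = A.mulVec (betaPlus A i) := by
  have hsplit : List.range n = List.range i.val ++ i.val :: ((List.range (n - i.val - 1)).map (fun k => i.val + 1 + k)) := by
    have h1 : n = (i.val + 1) + (n - i.val - 1) := by omega
    conv_lhs => rw [h1]
    rw [List.range_add, List.range_succ]
    simp [List.append_assoc]
  rw [coxS_eq_snat, hsplit, List.foldr_append]
  have htail : ((List.range (n - i.val - 1)).map (fun k => i.val + 1 + k)).foldr
      (fun j w => Snat A j w) (Pi.single i (1 : ℤ)) = Pi.single i (1 : ℤ) := by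
    apply foldr_snat_fix
    intro j hj
    simp only [List.mem_map] at hj
    obtain ⟨k, _, rfl⟩ := hj
    omega
  rw [List.foldr_cons, htail]
  have hmid : Snat A i.val (Pi.single i (1 : ℤ))
      = Pi.single i (1 : ℤ) - A.mulVec (Pi.single i (1 : ℤ)) := by
    unfold Snat
    rw [dif_pos i.isLt]
    have : (⟨i.val, i.isLt⟩ : Fin n) = i := rfl
    rw [this]
    unfold Smap
    rw [mulVec_single_eq]
    simp
  rw [hmid, foldr_snat_step A i _ _ (fun j hj => by simp only [List.mem_range] at hj; omega)]
  rw [betaPlus]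
  abel
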